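/- The noise channel induced by a photon loss on the target mode during the CNOT gate, averaged over the uniformly random jump time, equals an incoherent mixture of Z₂ and Z₁Z₂ phase-flip errors with coherences: for every 4×4 complex matrix ρ, (1/π) ∫_{−π}^{0} U_err(θ) ρ U_err(θ)† dθ = ½ Z₂ ρ Z₂ + ½ Z₁Z₂ ρ Z₁Z₂ + (i/π) Z₁Z₂ ρ Z₂ − (i/π) Z₂ ρ Z₁Z₂, where U_err(θ) = ½(I + Z₁)Z₂ + ½ e^{iθ}(I − Z₁)Z₂. -/

import Mathlib

open Matrix Kronecker

attribute [local instance] Matrix.normedAddCommGroup Matrix.normedSpace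

/-- The Pauli-Z matrix `diag(1, -1)`. -/
noncomputable def PauliZ : Matrix (Fin 2) (Fin 2) ℂ := !![1, 0; 0, -1]

/-- `Z₁ = Z ⊗ I` on two qubits. -/
noncomputable def Z1 : Matrix (Fin 2 × Fin 2) (Fin 2 × Fin 2) ℂ :=
  PauliZ ⊗ₖ (1 : Matrix (Fin 2) (Fin 2) ℂ)

/-- `Z₂ = I ⊗ Z` on two qubits. -/
noncomputable def Z2 : Matrix (Fin 2 × Fin 2) (Fin 2 × Fin 2) ℂ :=
  (1 : Matrix (Fin 2) (Fin 2) ℂ) ⊗ₖ PauliZ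

/-- The error unitary `U_err(θ) = ½(I + Z₁)Z₂ + ½ e^{iθ}(I − Z₁)Z₂` produced by a
photon loss on the target mode at a (rescaled) random time `θ` during the CNOT. -/
noncomputable def UerrCNOT (θ : ℝ) : Matrix (Fin 2 × Fin 2) (Fin 2 × Fin 2) ℂ :=
  ((1 : ℂ) / 2) • (((1 : Matrix (Fin 2 × Fin 2) (Fin 2 × Fin 2) ℂ) + Z1) * Z2)
    + ((1 : ℂ) / 2 * Complex.exp (Complex.I * (θ : ℂ))) •
        (((1 : Matrix (Fin 2 × Fin 2) (Fin 2 × Fin 2) ℂ) - Z1) * Z2)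

lemma Z1_herm : Z1ᴴ = Z1 := by
  ext ⟨i,j⟩ ⟨k,l⟩
  fin_cases i <;> fin_cases j <;> fin_cases k <;> fin_cases l <;>
    simp [Z1, PauliZ, Matrix.one_apply, Matrix.conjTranspose_apply]

lemma Z2_herm : Z2ᴴ = Z2 := by
  ext ⟨i,j⟩ ⟨k,l⟩
  fin_cases i <;> fin_cases j <;> fin_cases k <;> fin_cases l <;>
    simp [Z2, PauliZ, Matrix.one_apply, Matrix.conjTranspose_apply]

lemma Z_comm : Z1 * Z2 = Z2 * Z1 := by
  simp [Z1, Z2, ← Matrix.mul_kronecker_mul, Matrix.one_mul, Matrix.mul_one]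

/-- The noise channel induced by a photon loss on the target mode during the CNOT,
averaged over the uniformly random jump time, is an incoherent mixture of `Z₂` and
`Z₁Z₂` phase flips together with coherences:
`(1/π)∫_{−π}^0 U_err(θ) ρ U_err(θ)† dθ
  = ½ Z₂ρZ₂ + ½ Z₁Z₂ρZ₁Z₂ + (i/π) Z₁Z₂ρZ₂ − (i/π) Z₂ρZ₁Z₂`. -/
theorem CNOT_photon_loss_channel (ρ : Matrix (Fin 2 × Fin 2) (Fin 2 × Fin 2) ℂ) :
    ((1 : ℂ) / (Real.pi : ℂ)) •
        (∫ θ in (-Real.pi : ℝ)..0, UerrCNOT θ * ρ * (UerrCNOT θ)ᴴ)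
      = ((1 : ℂ) / 2) • (Z2 * ρ * Z2)
        + ((1 : ℂ) / 2) • ((Z1 * Z2) * ρ * (Z1 * Z2))
        + (Complex.I / (Real.pi : ℂ)) • ((Z1 * Z2) * ρ * Z2)
        - (Complex.I / (Real.pi : ℂ)) • (Z2 * ρ * (Z1 * Z2)) := by
  have hπ : (Real.pi : ℂ) ≠ 0 := by
    exact_mod_cast Complex.ofReal_ne_zero.mpr Real.pi_ne_zero
  set One : Matrix (Fin 2 × Fin 2) (Fin 2 × Fin 2) ℂ := 1 with hOne
  set P : Matrix (Fin 2 × Fin 2) (Fin 2 × Fin 2) ℂ := (One + Z1) * Z2 with hP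
  set M : Matrix (Fin 2 × Fin 2) (Fin 2 × Fin 2) ℂ := (One - Z1) * Z2 with hM
  have hPH : Pᴴ = P := by
    rw [hP, Matrix.conjTranspose_mul, Matrix.conjTranspose_add, Z1_herm, Z2_herm,
      Matrix.conjTranspose_one, hOne, Matrix.mul_add, Matrix.add_mul, Matrix.mul_one,
      Matrix.one_mul, Z_comm]
  have hMH : Mᴴ = M := by
    rw [hM, Matrix.conjTranspose_mul, Matrix.conjTranspose_sub, Z1_herm, Z2_herm,
      Matrix.conjTranspose_one, hOne, Matrix.mul_sub, Matrix.sub_mul, Matrix.mul_one,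
      Matrix.one_mul, Z_comm]
  have hInt : ∀ θ : ℝ, UerrCNOT θ * ρ * (UerrCNOT θ)ᴴ =
      ((1:ℂ)/4) • (P * ρ * P + M * ρ * M)
        + (((1:ℂ)/4) * Complex.exp ((-Complex.I) * (θ:ℂ))) • (P * ρ * M)
        + (((1:ℂ)/4) * Complex.exp (Complex.I * (θ:ℂ))) • (M * ρ * P) := by
    intro θ
    have h1 : Complex.exp ((-Complex.I) * (θ:ℂ)) * Complex.exp (Complex.I * (θ:ℂ)) = 1 := by
      rw [← Complex.exp_add]; ring_nf; exact Complex.exp_zero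
    simp only [UerrCNOT, ← hOne, ← hP, ← hM, Matrix.conjTranspose_add, Matrix.conjTranspose_smul,
      hPH, hMH, Matrix.add_mul, Matrix.mul_add, Matrix.smul_mul, Matrix.mul_smul,
      smul_smul, star_mul', map_div₀, 
      Complex.star_def, ← Complex.exp_conj, _root_.map_one, map_ofNat, _root_.map_mul, Complex.conj_I, Complex.conj_ofReal]
    simp only [smul_add, smul_smul]
    match_scalars <;> ring_nf <;> simp [← Complex.exp_add]
  simp_rw [hInt]
  letI : TopologicalSpace (Matrix (Fin 2 × Fin 2) (Fin 2 × Fin 2) ℂ) := (PseudoMetricSpace.toUniformSpace : UniformSpace (Matrix (Fin 2 × Fin 2) (Fin 2 × Fin 2) ℂ)).toTopologicalSpace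
  have i1 : IntervalIntegrable
      (fun _ : ℝ => ((1:ℂ)/4) • (P * ρ * P + M * ρ * M)) MeasureTheory.volume (-Real.pi) 0 :=
    intervalIntegrable_const
  have i2 : IntervalIntegrable
      (fun θ : ℝ => (((1:ℂ)/4) * Complex.exp ((-Complex.I) * (θ:ℂ))) • (P * ρ * M))
      MeasureTheory.volume (-Real.pi) 0 := by
    apply Continuous.intervalIntegrable; fun_prop
  have i3 : IntervalIntegrable
      (fun θ : ℝ => (((1:ℂ)/4) * Complex.exp (Complex.I * (θ:ℂ))) • (M * ρ * P))
      MeasureTheory.volume (-Real.pi) 0 := by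
    apply Continuous.intervalIntegrable; fun_prop
  rw [intervalIntegral.integral_add (i1.add i2) i3, intervalIntegral.integral_add i1 i2,
    intervalIntegral.integral_const, intervalIntegral.integral_smul_const,
    intervalIntegral.integral_smul_const, intervalIntegral.integral_const_mul,
    intervalIntegral.integral_const_mul, integral_exp_mul_complex (by simp [Complex.I_ne_zero]),
    integral_exp_mul_complex Complex.I_ne_zero]
  have e1 : Complex.exp ((-Complex.I) * ((0:ℝ):ℂ)) = 1 := by simp
  have e2 : Complex.exp ((-Complex.I) * (((-Real.pi : ℝ)):ℂ)) = -1 := by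
    push_cast
    rw [show (-Complex.I) * (-(Real.pi:ℂ)) = (Real.pi:ℂ) * Complex.I by ring,
      Complex.exp_pi_mul_I]
  have e3 : Complex.exp (Complex.I * ((0:ℝ):ℂ)) = 1 := by simp
  have e4 : Complex.exp (Complex.I * (((-Real.pi : ℝ)):ℂ)) = -1 := by
    push_cast
    rw [show Complex.I * (-(Real.pi:ℂ)) = -((Real.pi:ℂ) * Complex.I) by ring,
      Complex.exp_neg, Complex.exp_pi_mul_I]
    norm_num
  rw [e1, e2, e3, e4]
  rw [show ((1:ℂ) - -1)/(-Complex.I) = 2*Complex.I by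
        rw [div_neg, Complex.div_I]; ring,
      show ((1:ℂ) - -1)/Complex.I = -(2*Complex.I) by
        rw [Complex.div_I]; ring]
  have hreal : (0 - (-Real.pi) : ℝ) • (((1:ℂ)/4) • (P * ρ * P + M * ρ * M))
      = ((Real.pi : ℂ) * (1/4)) • (P * ρ * P + M * ρ * M) := by
    rw [show (0 - (-Real.pi) : ℝ) = Real.pi by ring, ← algebraMap_smul ℂ Real.pi, smul_smul]
    norm_num [Algebra.algebraMap_eq_smul_one, Complex.real_smul]
  rw [hreal, hP, hM, hOne]
  simp only [Matrix.add_mul, Matrix.mul_add, Matrix.sub_mul, Matrix.mul_sub, Matrix.one_mul,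
    smul_add, smul_sub, smul_smul]
  match_scalars
  all_goals field_simp
  all_goals try ring
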